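/- arXiv:1306.2003 — 9 statements merged into one kernel-verified Lean document; each statement's English description precedes it below -/
import Mathlib

section
/- Let m ≥ 1 be an integer, L ≥ m a real number, Σ₁ and Σ₂ m×m Hermitian positive definite complex matrices, and β ∈ (0,1). Then the matrix Σ_β := (β·Σ₁⁻¹ + (1−β)·Σ₂⁻¹)⁻¹ is Hermitian positive definite, and for every m×m Hermitian positive definite complex matrix Z one has the pointwise identity f(Z;Σ₁,L)^β · f(Z;Σ₂,L)^{1−β} = [det(Σ_β) / (det(Σ₁)^β · det(Σ₂)^{1−β})]^L · f(Z;Σ_β,L), where all determinants are the (positive real) determinants of the Hermitian positive definite matrices involved. (This identity underlies the closed-form Rényi, Bhattacharyya and Hellinger distances between scaled complex Wishart laws.) -/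
open Matrix ComplexOrder

/-- Real (positive) determinant of a Hermitian positive definite complex matrix. -/
noncomputable def pdet {m : ℕ} (A : Matrix (Fin m) (Fin m) ℂ) : ℝ := A.det.re

/-- Real trace. -/
noncomputable def rtrace {m : ℕ} (A : Matrix (Fin m) (Fin m) ℂ) : ℝ := A.trace.re

/-- Multivariate gamma function Γ_m(L) = π^{m(m−1)/2} ∏_{i=0}^{m−1} Γ(L−i). -/
noncomputable def mGamma (m : ℕ) (L : ℝ) : ℝ :=
  Real.pi ^ (m * (m - 1) / 2) * ∏ i ∈ Finset.range m, Real.Gamma (L - i)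

/-- Scaled complex Wishart density. -/
noncomputable def wdens (m : ℕ) (L : ℝ) (S Z : Matrix (Fin m) (Fin m) ℂ) : ℝ :=
  L ^ ((m : ℝ) * L) * pdet Z ^ (L - (m : ℝ)) * Real.exp (-(L * rtrace (S⁻¹ * Z)))
    / (pdet S ^ L * mGamma m L)

lemma posDef_real_smul {m : ℕ} {A : Matrix (Fin m) (Fin m) ℂ} (hA : A.PosDef)
    {c : ℝ} (hc : 0 < c) : ((c : ℂ) • A).PosDef := by
  refine ⟨?_, fun x hx => ?_⟩
  · unfold Matrix.IsHermitian
    rw [conjTranspose_smul, hA.1.eq]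
    norm_num
  · have hc' : (0 : ℂ) < (c : ℂ) := by exact_mod_cast hc
    exact (hA.smul hc').2 hx

lemma pdet_pos {m : ℕ} {A : Matrix (Fin m) (Fin m) ℂ} (hA : A.PosDef) : 0 < pdet A := by
  have h := hA.det_pos
  rw [Complex.lt_def] at h
  simpa [pdet] using h.1

lemma auxkey (L β K A G d₁ d₂ dβ t₁ t₂ : ℝ)
    (hK : 0 < K) (hA : 0 < A) (hG : 0 < G)
    (hd₁ : 0 < d₁) (hd₂ : 0 < d₂) (hdβ : 0 < dβ) :
    (K * A * Real.exp (-(L * t₁)) / (d₁ ^ L * G)) ^ β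
      * (K * A * Real.exp (-(L * t₂)) / (d₂ ^ L * G)) ^ (1 - β)
    = (dβ / (d₁ ^ β * d₂ ^ (1 - β))) ^ L
      * (K * A * Real.exp (-(L * (β * t₁ + (1 - β) * t₂))) / (dβ ^ L * G)) := by
  rw [show K = Real.exp (Real.log K) from (Real.exp_log hK).symm,
      show A = Real.exp (Real.log A) from (Real.exp_log hA).symm,
      show G = Real.exp (Real.log G) from (Real.exp_log hG).symm,
      show d₁ = Real.exp (Real.log d₁) from (Real.exp_log hd₁).symm,
      show d₂ = Real.exp (Real.log d₂) from (Real.exp_log hd₂).symm,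
      show dβ = Real.exp (Real.log dβ) from (Real.exp_log hdβ).symm]
  simp only [← Real.exp_mul, ← Real.exp_add, ← Real.exp_sub, Real.exp_eq_exp]
  ring

theorem stmt0 (m : ℕ) (hm : 1 ≤ m) (L : ℝ) (hL : (m : ℝ) ≤ L)
    (S₁ S₂ : Matrix (Fin m) (Fin m) ℂ) (h₁ : S₁.PosDef) (h₂ : S₂.PosDef)
    (β : ℝ) (hβ : β ∈ Set.Ioo (0 : ℝ) 1)
    (Sβ : Matrix (Fin m) (Fin m) ℂ)
    (hSβ : Sβ = ((β : ℂ) • S₁⁻¹ + ((1 - β : ℝ) : ℂ) • S₂⁻¹)⁻¹) :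
    Sβ.PosDef ∧
    ∀ Z : Matrix (Fin m) (Fin m) ℂ, Z.PosDef →
      wdens m L S₁ Z ^ β * wdens m L S₂ Z ^ (1 - β)
        = (pdet Sβ / (pdet S₁ ^ β * pdet S₂ ^ (1 - β))) ^ L * wdens m L Sβ Z := by
  obtain ⟨hβ0, hβ1⟩ := hβ
  have hβ1' : 0 < 1 - β := by linarith
  have hM : (((β : ℂ) • S₁⁻¹ + ((1 - β : ℝ) : ℂ) • S₂⁻¹)).PosDef :=
    (posDef_real_smul h₁.inv hβ0).add (posDef_real_smul h₂.inv hβ1')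
  have hSβpd : Sβ.PosDef := hSβ ▸ hM.inv
  refine ⟨hSβpd, fun Z hZ => ?_⟩
  -- positivity facts
  have hLpos : (0 : ℝ) < L := lt_of_lt_of_le (by exact_mod_cast hm) hL
  have hK : 0 < L ^ ((m : ℝ) * L) := Real.rpow_pos_of_pos hLpos _
  have hA : 0 < pdet Z ^ (L - (m : ℝ)) := Real.rpow_pos_of_pos (pdet_pos hZ) _
  have hG : 0 < mGamma m L := by
    refine mul_pos (pow_pos Real.pi_pos _) (Finset.prod_pos fun i hi => ?_)
    refine Real.Gamma_pos_of_pos (by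
      have : (i : ℝ) < m := by exact_mod_cast Finset.mem_range.mp hi
      linarith)
  -- the inverse of Sβ
  have hSβinv : Sβ⁻¹ = (β : ℂ) • S₁⁻¹ + ((1 - β : ℝ) : ℂ) • S₂⁻¹ := by
    rw [hSβ]
    exact Matrix.nonsing_inv_nonsing_inv _ (Matrix.isUnit_iff_isUnit_det _ |>.mp hM.isUnit)
  have htr : rtrace (Sβ⁻¹ * Z)
      = β * rtrace (S₁⁻¹ * Z) + (1 - β) * rtrace (S₂⁻¹ * Z) := by
    rw [hSβinv]
    simp [rtrace, Matrix.add_mul, Matrix.smul_mul, Matrix.trace_add, Matrix.trace_smul,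
      Complex.add_re, Complex.real_smul, Complex.mul_re, Complex.ofReal_re, Complex.ofReal_im]
  simp only [wdens, htr]
  exact auxkey L β _ _ _ _ _ _ _ _ hK hA hG (pdet_pos h₁) (pdet_pos h₂) (pdet_pos hSβpd)
end

section
/- Let m ≥ 1 be an integer, L ≥ m a real number, and Σ₁, Σ₂ m×m Hermitian positive definite complex matrices. Then the matrix Σ_h := ((Σ₁⁻¹ + Σ₂⁻¹)/2)⁻¹ is Hermitian positive definite, and for every m×m Hermitian positive definite complex matrix Z one has the pointwise identity √(f(Z;Σ₁,L) · f(Z;Σ₂,L)) = [det(Σ_h) / √(det(Σ₁)·det(Σ₂))]^L · f(Z;Σ_h,L). (This identity underlies the closed-form Bhattacharyya and Hellinger distances between scaled complex Wishart laws.) -/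
open Matrix ComplexOrder

theorem stmt1 (m : ℕ) (hm : 1 ≤ m) (L : ℝ) (hL : (m : ℝ) ≤ L)
    (S₁ S₂ : Matrix (Fin m) (Fin m) ℂ) (h₁ : S₁.PosDef) (h₂ : S₂.PosDef)
    (Sh : Matrix (Fin m) (Fin m) ℂ)
    (hSh : Sh = (((2 : ℂ))⁻¹ • (S₁⁻¹ + S₂⁻¹))⁻¹) :
    Sh.PosDef ∧
    ∀ Z : Matrix (Fin m) (Fin m) ℂ, Z.PosDef →
      Real.sqrt (wdens m L S₁ Z * wdens m L S₂ Z)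
        = (pdet Sh / Real.sqrt (pdet S₁ * pdet S₂)) ^ L * wdens m L Sh Z := by
  have h2c : (0:ℂ) < 2⁻¹ := by
    rw [show ((2:ℂ))⁻¹ = ((2⁻¹:ℝ):ℂ) from by norm_num]
    exact Complex.zero_lt_real.mpr (by norm_num)
  set A := (2:ℂ)⁻¹ • (S₁⁻¹ + S₂⁻¹) with hA
  have hApd : A.PosDef := by
    refine Matrix.PosDef.of_dotProduct_mulVec_pos ?_ (fun x hx => ?_)
    · unfold Matrix.IsHermitian
      rw [hA, conjTranspose_smul, (h₁.inv.isHermitian.add h₂.inv.isHermitian)]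
      norm_num
    · have p1 := h₁.inv.dotProduct_mulVec_pos hx
      have p2 := h₂.inv.dotProduct_mulVec_pos hx
      have he : star x ⬝ᵥ A *ᵥ x
          = (2:ℂ)⁻¹ * (star x ⬝ᵥ S₁⁻¹ *ᵥ x + star x ⬝ᵥ S₂⁻¹ *ᵥ x) := by
        rw [hA, smul_mulVec, dotProduct_smul, add_mulVec, dotProduct_add, smul_eq_mul]
      rw [he]
      exact mul_pos h2c (add_pos p1 p2)
  have hShpd : Sh.PosDef := hSh ▸ hApd.inv
  refine ⟨hShpd, fun Z hZ => ?_⟩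
  -- inverse of Sh is A
  have hShinv : Sh⁻¹ = A := by
    rw [hSh, Matrix.nonsing_inv_nonsing_inv]
    exact (Matrix.isUnit_iff_isUnit_det A).mp hApd.isUnit
  -- trace identity
  have htr : rtrace (S₁⁻¹ * Z) + rtrace (S₂⁻¹ * Z) = 2 * rtrace (Sh⁻¹ * Z) := by
    rw [hShinv]
    unfold rtrace
    rw [hA, Matrix.smul_mul, trace_smul, add_mul, trace_add]
    simp [Complex.add_re, smul_eq_mul, Complex.mul_re]
  -- positivity
  have p1 := pdet_pos h₁
  have p2 := pdet_pos h₂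
  have ph := pdet_pos hShpd
  have pz := pdet_pos hZ
  have hL0 : (0:ℝ) < L := lt_of_lt_of_le (by exact_mod_cast hm) hL
  have hg : 0 < mGamma m L := by
    unfold mGamma
    refine mul_pos (pow_pos Real.pi_pos _) (Finset.prod_pos fun i hi => ?_)
    refine Real.Gamma_pos_of_pos ?_
    have : (i:ℝ) < m := by exact_mod_cast Finset.mem_range.mp hi
    linarith
  set t1 := rtrace (S₁⁻¹ * Z) with ht1
  set t2 := rtrace (S₂⁻¹ * Z) with ht2
  set th := rtrace (Sh⁻¹ * Z) with hth
  set c := L ^ ((m : ℝ) * L) * pdet Z ^ (L - (m : ℝ)) with hc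
  have hcpos : 0 < c := mul_pos (Real.rpow_pos_of_pos hL0 _) (Real.rpow_pos_of_pos pz _)
  set s := Real.sqrt (pdet S₁ * pdet S₂) with hs
  have hspos : 0 < s := Real.sqrt_pos.mpr (mul_pos p1 p2)
  have hss : s * s = pdet S₁ * pdet S₂ := Real.mul_self_sqrt (mul_pos p1 p2).le
  -- exponentials
  have hexp : Real.exp (-(L * t1)) * Real.exp (-(L * t2))
      = Real.exp (-(L * th)) ^ 2 := by
    rw [← Real.exp_add, sq, ← Real.exp_add]
    congr 1
    have : t1 + t2 = 2 * th := htr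
    nlinarith [this]
  -- rpow facts
  have hsL : s ^ L * s ^ L = pdet S₁ ^ L * pdet S₂ ^ L := by
    rw [← Real.mul_rpow hspos.le hspos.le, hss, Real.mul_rpow p1.le p2.le]
  have hdivL : (pdet Sh / s) ^ L = pdet Sh ^ L / s ^ L := Real.div_rpow ph.le hspos.le L
  have key : wdens m L S₁ Z * wdens m L S₂ Z
      = ((pdet Sh / s) ^ L * wdens m L Sh Z) ^ 2 := by
    unfold wdens
    rw [hdivL, ← hc]
    have hphL : (0:ℝ) < pdet Sh ^ L := Real.rpow_pos_of_pos ph _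
    have hp1L : (0:ℝ) < pdet S₁ ^ L := Real.rpow_pos_of_pos p1 _
    have hp2L : (0:ℝ) < pdet S₂ ^ L := Real.rpow_pos_of_pos p2 _
    have hsLpos : (0:ℝ) < s ^ L := Real.rpow_pos_of_pos hspos _
    rw [← ht1, ← ht2, ← hth]
    field_simp
    linear_combination ((s^L)^2) * hexp
      + (Real.exp (-(L*th))^2) * hsL
  have hwh : 0 ≤ wdens m L Sh Z := by unfold wdens; positivity
  rw [key, Real.sqrt_sq (mul_nonneg (Real.rpow_nonneg (div_nonneg ph.le hspos.le) L) hwh)]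
end

section
/- Let m ≥ 1 be an integer and Σ₁, Σ₂ m×m Hermitian positive definite complex matrices. Then Re[tr(Σ₁⁻¹·Σ₂) + tr(Σ₂⁻¹·Σ₁)] ≥ 2m, with equality if and only if Σ₁ = Σ₂. Consequently, for every real L > 0 the closed-form Kullback–Leibler distance d_KL(Σ₁,Σ₂) = L·[Re tr(Σ₁⁻¹Σ₂ + Σ₂⁻¹Σ₁)/2 − m] between two scaled complex Wishart laws with the same number of looks is nonnegative and vanishes exactly when Σ₁ = Σ₂. -/
open Matrix ComplexOrder

lemma trace_mul_conjTranspose_re {m : ℕ} (A : Matrix (Fin m) (Fin m) ℂ) :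
    (A * Aᴴ).trace.re = ∑ i, ∑ j, Complex.normSq (A i j) := by
  simp only [Matrix.trace, Matrix.diag, Matrix.mul_apply, Matrix.conjTranspose_apply]
  rw [Complex.re_sum]
  refine Finset.sum_congr rfl fun i _ => ?_
  rw [Complex.re_sum]
  refine Finset.sum_congr rfl fun j _ => ?_
  simp [Complex.normSq_apply, Complex.mul_re]

open scoped MatrixOrder in
lemma key_lemma (m : ℕ) (S₁ S₂ : Matrix (Fin m) (Fin m) ℂ) (h₁ : S₁.PosDef) (h₂ : S₂.PosDef) :
    (2 * (m : ℝ) ≤ ((S₁⁻¹ * S₂).trace + (S₂⁻¹ * S₁).trace).re) ∧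
    (((S₁⁻¹ * S₂).trace + (S₂⁻¹ * S₁).trace).re = 2 * (m : ℝ) ↔ S₁ = S₂) := by
  have h₁' : (S₁⁻¹).PosDef := h₁.inv
  have h₂' : (S₂⁻¹).PosDef := h₂.inv
  set R := CFC.sqrt (S₁⁻¹) with hRdef
  set T := CFC.sqrt (S₂⁻¹) with hTdef
  have hRR : R * R = S₁⁻¹ := CFC.sqrt_mul_sqrt_self _ h₁'.posSemidef.nonneg
  have hTT : T * T = S₂⁻¹ := CFC.sqrt_mul_sqrt_self _ h₂'.posSemidef.nonneg
  have hRH : Rᴴ = R := (CFC.sqrt_nonneg (S₁⁻¹)).posSemidef.isHermitian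
  have hTH : Tᴴ = T := (CFC.sqrt_nonneg (S₂⁻¹)).posSemidef.isHermitian
  set D := S₂ - S₁ with hDdef
  have hDH : Dᴴ = D := by
    simp [hDdef, Matrix.conjTranspose_sub, h₁.1.eq, h₂.1.eq]
  set A := R * D * T with hAdef
  have e1 : S₁⁻¹ * S₁ = 1 := Matrix.nonsing_inv_mul _ ((Matrix.isUnit_iff_isUnit_det _).mp h₁.isUnit)
  have e1' : S₁ * S₁⁻¹ = 1 := Matrix.mul_nonsing_inv _ ((Matrix.isUnit_iff_isUnit_det _).mp h₁.isUnit)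
  have e2 : S₂⁻¹ * S₂ = 1 := Matrix.nonsing_inv_mul _ ((Matrix.isUnit_iff_isUnit_det _).mp h₂.isUnit)
  have e2' : S₂ * S₂⁻¹ = 1 := Matrix.mul_nonsing_inv _ ((Matrix.isUnit_iff_isUnit_det _).mp h₂.isUnit)
  have t1 : S₁⁻¹ * D = S₁⁻¹ * S₂ - 1 := by rw [hDdef, Matrix.mul_sub, e1]
  have t3 : (S₁⁻¹ * S₂) * (S₂⁻¹ * S₁) = 1 := by
    rw [Matrix.mul_assoc, ← Matrix.mul_assoc S₂, e2', Matrix.one_mul, e1]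
  have expand : S₁⁻¹ * (D * (S₂⁻¹ * D)) = S₁⁻¹ * S₂ + S₂⁻¹ * S₁ - (1 + 1) := by
    calc S₁⁻¹ * (D * (S₂⁻¹ * D))
        = (S₁⁻¹ * D) * (S₂⁻¹ * D) := by rw [Matrix.mul_assoc]
      _ = (S₁⁻¹ * S₂ - 1) * (1 - S₂⁻¹ * S₁) := by
          rw [t1, hDdef, Matrix.mul_sub S₂⁻¹, e2]
      _ = S₁⁻¹ * S₂ + S₂⁻¹ * S₁ - (1 + 1) := by
          rw [Matrix.sub_mul, Matrix.one_mul, Matrix.mul_sub, Matrix.mul_one, t3]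
          abel
  have tstep : (A * Aᴴ).trace = (S₁⁻¹ * (D * (S₂⁻¹ * D))).trace := by
    have hAH : Aᴴ = T * D * R := by
      rw [hAdef, Matrix.conjTranspose_mul, Matrix.conjTranspose_mul, hRH, hTH, hDH,
        Matrix.mul_assoc]
    rw [hAdef, hAH, Matrix.trace_mul_comm]
    simp only [Matrix.mul_assoc]
    rw [show R * (R * (D * T)) = S₁⁻¹ * (D * T) by rw [← Matrix.mul_assoc, hRR]]
    rw [Matrix.trace_mul_comm]
    simp only [Matrix.mul_assoc]
    rw [hTT, Matrix.trace_mul_comm]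
    simp only [Matrix.mul_assoc]
  have traceAA : (A * Aᴴ).trace = (S₁⁻¹ * S₂).trace + (S₂⁻¹ * S₁).trace - 2 * m := by
    rw [tstep, expand, Matrix.trace_sub, Matrix.trace_add, Matrix.trace_add, Matrix.trace_one,
      Fintype.card_fin]
    ring
  have hre : ((S₁⁻¹ * S₂).trace + (S₂⁻¹ * S₁).trace).re
      = 2 * (m : ℝ) + ∑ i, ∑ j, Complex.normSq (A i j) := by
    rw [← trace_mul_conjTranspose_re, traceAA]
    simp [Complex.sub_re, Complex.add_re, Complex.mul_re]
  have hsum_nonneg : 0 ≤ ∑ i, ∑ j, Complex.normSq (A i j) :=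
    Finset.sum_nonneg fun i _ => Finset.sum_nonneg fun j _ => Complex.normSq_nonneg _
  constructor
  · rw [hre]; linarith
  constructor
  · intro h
    have hz : ∑ i, ∑ j, Complex.normSq (A i j) = 0 := by rw [hre] at h; linarith
    have hA0 : A = 0 := by
      ext i j
      have hi := (Finset.sum_eq_zero_iff_of_nonneg
        (fun i _ => Finset.sum_nonneg fun j _ => Complex.normSq_nonneg (A i j))).mp hz i
        (Finset.mem_univ i)
      have hj := (Finset.sum_eq_zero_iff_of_nonneg
        (fun j _ => Complex.normSq_nonneg (A i j))).mp hi j (Finset.mem_univ j)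
      simpa using Complex.normSq_eq_zero.mp hj
    have hRu : IsUnit R.det := by
      have h' : R.det * R.det = (S₁⁻¹).det := by rw [← Matrix.det_mul, hRR]
      have hd : IsUnit (S₁⁻¹).det := (Matrix.isUnit_iff_isUnit_det _).mp h₁'.isUnit
      exact isUnit_of_mul_isUnit_left (h' ▸ hd)
    have hTu : IsUnit T.det := by
      have h' : T.det * T.det = (S₂⁻¹).det := by rw [← Matrix.det_mul, hTT]
      have hd : IsUnit (S₂⁻¹).det := (Matrix.isUnit_iff_isUnit_det _).mp h₂'.isUnit
      exact isUnit_of_mul_isUnit_left (h' ▸ hd)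
    have hD0 : D = 0 := by
      have h' : R⁻¹ * (R * D * T * T⁻¹) = 0 := by rw [← hAdef, hA0]; simp
      rw [Matrix.mul_assoc (R * D), Matrix.mul_nonsing_inv _ hTu, Matrix.mul_one,
        ← Matrix.mul_assoc, Matrix.nonsing_inv_mul _ hRu, Matrix.one_mul] at h'
      exact h'
    have h'' := sub_eq_zero.mp (hDdef ▸ hD0)
    exact h''.symm
  · intro h
    rw [← h, e1]
    norm_num [Matrix.trace_one, Complex.add_re]
    ring

theorem stmt4 (m : ℕ) (hm : 1 ≤ m)
    (S₁ S₂ : Matrix (Fin m) (Fin m) ℂ) (h₁ : S₁.PosDef) (h₂ : S₂.PosDef) :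
    (2 * (m : ℝ) ≤ ((S₁⁻¹ * S₂).trace + (S₂⁻¹ * S₁).trace).re) ∧
    (((S₁⁻¹ * S₂).trace + (S₂⁻¹ * S₁).trace).re = 2 * (m : ℝ) ↔ S₁ = S₂) ∧
    ∀ L : ℝ, 0 < L →
      0 ≤ L * (((S₁⁻¹ * S₂).trace + (S₂⁻¹ * S₁).trace).re / 2 - (m : ℝ)) ∧
      (L * (((S₁⁻¹ * S₂).trace + (S₂⁻¹ * S₁).trace).re / 2 - (m : ℝ)) = 0 ↔ S₁ = S₂) := by
  obtain ⟨hge, hiff⟩ := key_lemma m S₁ S₂ h₁ h₂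
  refine ⟨hge, hiff, fun L hL => ?_⟩
  constructor
  · have : (0:ℝ) ≤ ((S₁⁻¹ * S₂).trace + (S₂⁻¹ * S₁).trace).re / 2 - m := by linarith
    positivity
  · rw [mul_eq_zero]
    constructor
    · rintro (h | h)
      · exact absurd h hL.ne'
      · exact hiff.mp (by linarith)
    · intro h
      right
      have := hiff.mpr h
      linarith
end

section
/- Let m ≥ 1 be an integer and Σ₁, Σ₂ m×m Hermitian positive definite complex matrices. Then det(((Σ₁⁻¹ + Σ₂⁻¹)/2)⁻¹) ≤ √(det(Σ₁)·det(Σ₂)), where all determinants are the (positive real) determinants of Hermitian positive definite matrices, and equality holds if and only if Σ₁ = Σ₂. Consequently, for every real L > 0 the closed-form Bhattacharyya distance d_BA(Σ₁,Σ₂) = L·[(log det Σ₁ + log det Σ₂)/2 − log det(((Σ₁⁻¹+Σ₂⁻¹)/2)⁻¹)] between two scaled complex Wishart laws with the same number of looks is nonnegative and vanishes exactly when Σ₁ = Σ₂. -/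
open Matrix ComplexOrder Finset

lemma det_posdef_real {n : ℕ} {A : Matrix (Fin n) (Fin n) ℂ} (hA : A.PosDef) :
    ∃ p : ℝ, 0 < p ∧ A.det = (p : ℂ) := by
  have h := hA.det_pos
  rw [Complex.lt_def] at h
  obtain ⟨hre, him⟩ := h
  exact ⟨A.det.re, by simpa using hre, Complex.ext rfl (by simpa using him.symm)⟩

open scoped MatrixOrder in
lemma core_lemma {n : ℕ} {P Q : Matrix (Fin n) (Fin n) ℂ}
    (hP : P.PosDef) (hQ : Q.PosDef) :
    ∃ x : ℝ, 0 < x ∧ (((2:ℂ))⁻¹ • (P + Q)).det = (x : ℂ) ∧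
      P.det.re * Q.det.re ≤ x ^ 2 ∧ (P.det.re * Q.det.re = x ^ 2 ↔ P = Q) := by
  classical
  obtain ⟨p, hp, hPdet⟩ := det_posdef_real hP
  obtain ⟨q, hq, hQdet⟩ := det_posdef_real hQ
  have hPre : P.det.re = p := by rw [hPdet]; simp
  have hQre0 : Q.det.re = q := by rw [hQdet]; simp
  set R := CFC.sqrt P with hRdef
  have hR : R.PosSemidef := (CFC.sqrt_nonneg P).posSemidef
  have hRR : R * R = P := CFC.sqrt_mul_sqrt_self P hP.posSemidef.nonneg
  have hdetR2 : R.det * R.det = (p : ℂ) := by rw [← hPdet, ← det_mul, hRR]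
  have hRdet_ne : R.det ≠ 0 := by
    intro h
    rw [h, mul_zero] at hdetR2
    exact (Complex.ofReal_ne_zero.mpr hp.ne') hdetR2.symm
  have hRu : IsUnit R.det := hRdet_ne.isUnit
  set M := R⁻¹ * Q * R⁻¹ with hMdef
  have hRinvH : R⁻¹ᴴ = R⁻¹ := by rw [conjTranspose_nonsing_inv, hR.1.eq]
  have hMps : M.PosSemidef := by
    have := hQ.posSemidef.mul_mul_conjTranspose_same R⁻¹
    rwa [hRinvH] at this
  have hQM : R * M * R = Q := by
    simp only [hMdef, Matrix.mul_assoc]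
    rw [Matrix.nonsing_inv_mul _ hRu, Matrix.mul_one, ← Matrix.mul_assoc,
      Matrix.mul_nonsing_inv _ hRu, Matrix.one_mul]
  set μ := hMps.1.eigenvalues with hμdef
  have hdetM : M.det = ∏ i, (μ i : ℂ) := hMps.1.det_eq_prod_eigenvalues
  have hdetQ : (q : ℂ) = (p : ℂ) * ∏ i, (μ i : ℂ) := by
    rw [← hQdet, ← hQM]
    conv_lhs => rw [det_mul, det_mul]
    rw [← hdetM]
    rw [show R.det * M.det * R.det = R.det * R.det * M.det by ring, hdetR2, hdetM]
  have hμpos : ∀ i, 0 < μ i := by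
    intro i
    rcases (hMps.eigenvalues_nonneg i).lt_or_eq with h | h
    · exact h
    · exfalso
      have hz : ∏ i, (μ i : ℂ) = 0 :=
        Finset.prod_eq_zero (mem_univ i)
          (by rw [show μ i = 0 from h.symm]; norm_num)
    -- q = p * 0 = 0 contradiction
      rw [hz, mul_zero] at hdetQ
      exact (Complex.ofReal_ne_zero.mpr hq.ne') hdetQ
  have hqprod : q = p * ∏ i, μ i := by
    have h' : (q : ℂ) = ((p * ∏ i, μ i : ℝ) : ℂ) := by rw [hdetQ]; push_cast; ring
    exact_mod_cast h'
  -- spectral decomposition of 1 + M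
  set U := (hMps.1.eigenvectorUnitary : Matrix (Fin n) (Fin n) ℂ) with hUdef
  have hUU : U * star U = 1 := Matrix.mem_unitaryGroup_iff.mp hMps.1.eigenvectorUnitary.2
  have h1M : (1 : Matrix (Fin n) (Fin n) ℂ) + M
      = U * (1 + diagonal (RCLike.ofReal ∘ μ)) * star U := by
    rw [Matrix.mul_add, Matrix.add_mul, Matrix.mul_one, hUU,
      ← (show M = U * diagonal (RCLike.ofReal ∘ μ) * star U by exact hMps.1.spectral_theorem)]
  have hdet1M : (1 + M).det = ∏ i, (1 + (μ i : ℂ)) := by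
    rw [h1M, det_mul_right_comm, hUU, Matrix.one_mul]
    rw [show (1 : Matrix (Fin n) (Fin n) ℂ) + diagonal (RCLike.ofReal ∘ μ)
        = diagonal (fun i => 1 + (μ i : ℂ)) by
      rw [← Matrix.diagonal_one, Matrix.diagonal_add]; rfl]
    rw [det_diagonal]
  have hPQsum : P + Q = R * (1 + M) * R := by
    rw [Matrix.mul_add, Matrix.add_mul, Matrix.mul_one, hRR, hQM]
  set x : ℝ := p * ∏ i, (1 + μ i)/2 with hxdef
  have hdetX : (((2:ℂ))⁻¹ • (P + Q)).det = (x : ℂ) := by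
    rw [det_smul, hPQsum]
    conv_lhs => rw [det_mul, det_mul]
    rw [show R.det * (1+M).det * R.det = R.det * R.det * (1+M).det by ring,
      hdetR2, hdet1M, Fintype.card_fin, hxdef]
    push_cast
    rw [Finset.prod_div_distrib, Finset.prod_const]
    rw [Finset.card_univ, Fintype.card_fin]
    field_simp
    rw [mul_right_comm, ← mul_pow]; norm_num
  have hprodpos : 0 < ∏ i, (1 + μ i)/2 :=
    Finset.prod_pos fun i _ => by have := hμpos i; linarith
  have hxpos : 0 < x := mul_pos hp hprodpos
  -- pointwise AM-GM
  have hpw : ∀ i, μ i ≤ ((1 + μ i)/2)^2 := fun i => by nlinarith [sq_nonneg (1 - μ i)]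
  have hprod_le : ∏ i, μ i ≤ ∏ i, ((1 + μ i)/2)^2 :=
    Finset.prod_le_prod (fun i _ => (hμpos i).le) (fun i _ => hpw i)
  have hx2 : x^2 = p^2 * ∏ i, ((1 + μ i)/2)^2 := by
    rw [hxdef, mul_pow, ← Finset.prod_pow]
  have hineq : P.det.re * Q.det.re ≤ x^2 := by
    rw [hPre, hQre0, hqprod, hx2]
    calc p * (p * ∏ i, μ i) = p^2 * ∏ i, μ i := by ring
      _ ≤ p^2 * ∏ i, ((1 + μ i)/2)^2 := by
          exact mul_le_mul_of_nonneg_left hprod_le (by positivity)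
  refine ⟨x, hxpos, hdetX, hineq, ?_, ?_⟩
  · -- equality implies P = Q
    intro heq
    rw [hPre, hQre0, hqprod, hx2] at heq
    have hp2 : p^2 ≠ 0 := by positivity
    have hprodeq : ∏ i, μ i = ∏ i, ((1 + μ i)/2)^2 := by
      apply mul_left_cancel₀ hp2
      nlinarith [heq]
    have hall : ∀ i, μ i = 1 := by
      intro i
      by_contra hne
      have hstrict : μ i < ((1 + μ i)/2)^2 := by
        rcases lt_or_gt_of_ne hne with h | h <;> nlinarith [sq_nonneg (1 - μ i)]
      have := Finset.prod_lt_prod (f := μ) (g := fun i => ((1 + μ i)/2)^2)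
        (fun j _ => hμpos j) (fun j _ => hpw j) ⟨i, mem_univ i, hstrict⟩
      exact absurd hprodeq (ne_of_lt this)
    have hfun : (RCLike.ofReal ∘ μ : Fin n → ℂ) = fun _ => 1 := by
      funext i; simp [hall i]
    have hM1 : M = 1 := by
      rw [hMps.1.spectral_theorem, hfun]
      rw [show Matrix.diagonal (fun _ => (1:ℂ)) = (1 : Matrix (Fin n) (Fin n) ℂ) from
        Matrix.diagonal_one]
      rw [map_one]
    rw [← hQM, hM1, Matrix.mul_one, hRR]
  · -- P = Q implies equality
    intro heq
    have hPP : ((2:ℂ))⁻¹ • (P + Q) = P := by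
      rw [← heq, ← two_smul ℂ P, smul_smul]
      norm_num
    have hxp : (x : ℂ) = (p : ℂ) := by rw [← hdetX, hPP, hPdet]
    have hxp' : x = p := by exact_mod_cast hxp
    have hqp : q = p := by
      have := hQdet
      rw [← heq, hPdet] at this
      exact_mod_cast this.symm
    rw [hPre, hQre0, hqp, hxp']
    ring




theorem stmt5 (m : ℕ) (hm : 1 ≤ m)
    (S₁ S₂ : Matrix (Fin m) (Fin m) ℂ) (h₁ : S₁.PosDef) (h₂ : S₂.PosDef) :
    pdet (((2 : ℂ))⁻¹ • (S₁⁻¹ + S₂⁻¹))⁻¹ ≤ Real.sqrt (pdet S₁ * pdet S₂) ∧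
    (pdet (((2 : ℂ))⁻¹ • (S₁⁻¹ + S₂⁻¹))⁻¹ = Real.sqrt (pdet S₁ * pdet S₂) ↔ S₁ = S₂) ∧
    ∀ L : ℝ, 0 < L →
      0 ≤ L * ((Real.log (pdet S₁) + Real.log (pdet S₂)) / 2
              - Real.log (pdet (((2 : ℂ))⁻¹ • (S₁⁻¹ + S₂⁻¹))⁻¹)) ∧
      (L * ((Real.log (pdet S₁) + Real.log (pdet S₂)) / 2
              - Real.log (pdet (((2 : ℂ))⁻¹ • (S₁⁻¹ + S₂⁻¹))⁻¹)) = 0 ↔ S₁ = S₂) := by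
  classical
  obtain ⟨p₁, hp₁, hd₁⟩ := det_posdef_real h₁
  obtain ⟨p₂, hp₂, hd₂⟩ := det_posdef_real h₂
  have hu₁ : IsUnit S₁.det := by rw [hd₁]; exact (Complex.ofReal_ne_zero.mpr hp₁.ne').isUnit
  have hu₂ : IsUnit S₂.det := by rw [hd₂]; exact (Complex.ofReal_ne_zero.mpr hp₂.ne').isUnit
  obtain ⟨x, hx, hXdet, hle, hiff⟩ := core_lemma h₁.inv h₂.inv
  -- values of pdet
  have hpdet₁ : pdet S₁ = p₁ := by rw [pdet, hd₁]; simp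
  have hpdet₂ : pdet S₂ = p₂ := by rw [pdet, hd₂]; simp
  have hdinv₁ : (S₁⁻¹).det = ((p₁⁻¹ : ℝ) : ℂ) := by
    rw [Matrix.det_nonsing_inv, Ring.inverse_eq_inv', hd₁]; push_cast; ring
  have hdinv₂ : (S₂⁻¹).det = ((p₂⁻¹ : ℝ) : ℂ) := by
    rw [Matrix.det_nonsing_inv, Ring.inverse_eq_inv', hd₂]; push_cast; ring
  have hre₁ : (S₁⁻¹).det.re = p₁⁻¹ := by rw [hdinv₁]; simp
  have hre₂ : (S₂⁻¹).det.re = p₂⁻¹ := by rw [hdinv₂]; simp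
  rw [hre₁, hre₂] at hle hiff
  have hXne : (((2:ℂ))⁻¹ • (S₁⁻¹ + S₂⁻¹)).det ≠ 0 := by
    rw [hXdet]; exact Complex.ofReal_ne_zero.mpr hx.ne'
  have hpdetX : pdet (((2 : ℂ))⁻¹ • (S₁⁻¹ + S₂⁻¹))⁻¹ = x⁻¹ := by
    rw [pdet, Matrix.det_nonsing_inv, Ring.inverse_eq_inv', hXdet, ← Complex.ofReal_inv]
    simp
  -- inverse equiv
  have hinv_iff : S₁⁻¹ = S₂⁻¹ ↔ S₁ = S₂ := by
    constructor
    · intro h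
      have := congrArg (·⁻¹) h
      simpa [Matrix.nonsing_inv_nonsing_inv _ hu₁, Matrix.nonsing_inv_nonsing_inv _ hu₂]
        using this
    · intro h; rw [h]
  set s := Real.sqrt (p₁ * p₂) with hsdef
  have hs : 0 < s := Real.sqrt_pos.mpr (mul_pos hp₁ hp₂)
  have hs2 : s ^ 2 = p₁ * p₂ := Real.sq_sqrt (mul_pos hp₁ hp₂).le
  -- main inequality
  have hsx2 : 1 ≤ (s * x) ^ 2 := by
    have hone : p₁ * p₂ * (p₁⁻¹ * p₂⁻¹) = 1 := by field_simp
    calc (1:ℝ) = p₁ * p₂ * (p₁⁻¹ * p₂⁻¹) := hone.symm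
      _ ≤ p₁ * p₂ * x ^ 2 := mul_le_mul_of_nonneg_left hle (mul_pos hp₁ hp₂).le
      _ = (s * x) ^ 2 := by rw [mul_pow, hs2]
  have h1 : 1 ≤ s * x := by nlinarith [mul_pos hs hx]
  have hxinv_le : x⁻¹ ≤ s := by
    calc x⁻¹ = 1 / x := (one_div x).symm
      _ ≤ (s * x) / x := by gcongr
      _ = s := by field_simp
  -- equality iff
  have heq_iff : x⁻¹ = s ↔ S₁ = S₂ := by
    rw [← hinv_iff, ← hiff]
    constructor
    · intro h
      have hxs : x = s⁻¹ := by rw [← h, inv_inv]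
      rw [hxs, inv_pow, hs2, mul_inv]
    · intro h
      have hx2 : x ^ 2 = (s⁻¹) ^ 2 := by
        rw [← h, inv_pow, hs2, mul_inv]
      have hxs : x = s⁻¹ := by
        nlinarith [hx, inv_pos.mpr hs, hx2]
      rw [hxs, inv_inv]
  rw [hpdetX, hpdet₁, hpdet₂]
  refine ⟨hxinv_le, heq_iff, ?_⟩
  intro L hL
  have hlog : Real.log (x⁻¹) ≤ (Real.log p₁ + Real.log p₂) / 2 := by
    have h2 : Real.log (x⁻¹) ≤ Real.log s := by
      apply Real.log_le_log (by positivity) hxinv_le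
    have h3 : Real.log s = (Real.log p₁ + Real.log p₂) / 2 := by
      rw [hsdef, Real.log_sqrt (mul_pos hp₁ hp₂).le, Real.log_mul hp₁.ne' hp₂.ne']
    linarith
  have hb : 0 ≤ (Real.log p₁ + Real.log p₂) / 2 - Real.log (x⁻¹) := by linarith
  refine ⟨mul_nonneg hL.le hb, ?_⟩
  rw [mul_eq_zero]
  constructor
  · rintro (h | h)
    · exact absurd h hL.ne'
    · have hlogeq : Real.log (x⁻¹) = Real.log s := by
        have h3 : Real.log s = (Real.log p₁ + Real.log p₂) / 2 := by
          rw [hsdef, Real.log_sqrt (mul_pos hp₁ hp₂).le, Real.log_mul hp₁.ne' hp₂.ne']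
        linarith
      have : x⁻¹ = s := by
        have e1 : Real.exp (Real.log (x⁻¹)) = x⁻¹ := Real.exp_log (by positivity)
        have e2 : Real.exp (Real.log s) = s := Real.exp_log hs
        rw [← e1, ← e2, hlogeq]
      exact heq_iff.mp this
  · intro h
    right
    have : x⁻¹ = s := heq_iff.mpr h
    have h3 : Real.log s = (Real.log p₁ + Real.log p₂) / 2 := by
      rw [hsdef, Real.log_sqrt (mul_pos hp₁ hp₂).le, Real.log_mul hp₁.ne' hp₂.ne']
    rw [this, h3]; ring
end

section
/- Let m ≥ 1 be an integer, L > 0 a real number, and Σ₁, Σ₂ m×m Hermitian positive definite complex matrices. Define the closed-form Hellinger distance d_H(Σ₁,Σ₂) = 1 − [det((2⁻¹(Σ₁⁻¹+Σ₂⁻¹))⁻¹) / √(det(Σ₁)·det(Σ₂))]^L, with determinants taken as positive reals. Then 0 ≤ d_H(Σ₁,Σ₂) < 1, and d_H(Σ₁,Σ₂) = 0 if and only if Σ₁ = Σ₂. In particular the Hellinger distance between scaled complex Wishart laws is confined to the interval [0,1]. -/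
open Matrix ComplexOrder

section HellingerAux
open Finset

/-- pointwise AM-GM : √x ≤ (1+x)/2 -/
lemma sqrt_le_half_add {x : ℝ} (hx : 0 ≤ x) : Real.sqrt x ≤ (1 + x) / 2 := by
  nlinarith [Real.sq_sqrt hx, sq_nonneg (Real.sqrt x - 1)]

lemma sqrt_lt_half_add {x : ℝ} (hx : 0 ≤ x) (hne : x ≠ 1) :
    Real.sqrt x < (1 + x) / 2 := by
  refine lt_of_le_of_ne (sqrt_le_half_add hx) fun heq => hne ?_
  have h0 : (Real.sqrt x - 1) ^ 2 = 0 := by nlinarith [Real.sq_sqrt hx]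
  have h1 : Real.sqrt x = 1 := by
    have := pow_eq_zero_iff (n := 2) (by norm_num) |>.mp h0
    linarith
  nlinarith [Real.sq_sqrt hx]

lemma prod_key {m : ℕ} (μ : Fin m → ℝ) (hμ : ∀ i, 0 < μ i) :
    Real.sqrt (∏ i, μ i) ≤ ∏ i, (1 + μ i) / 2 ∧
      ((∏ i, (1 + μ i) / 2 = Real.sqrt (∏ i, μ i)) ↔ ∀ i, μ i = 1) := by
  have hprod : (∏ i, μ i) = (∏ i, Real.sqrt (μ i)) ^ 2 := by
    rw [← Finset.prod_pow]
    exact Finset.prod_congr rfl fun i _ => (Real.sq_sqrt (hμ i).le).symm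
  have hs : Real.sqrt (∏ i, μ i) = ∏ i, Real.sqrt (μ i) := by
    rw [hprod, Real.sqrt_sq (Finset.prod_nonneg fun i _ => Real.sqrt_nonneg _)]
  rw [hs]
  have hle : ∀ i ∈ Finset.univ (α := Fin m), Real.sqrt (μ i) ≤ (1 + μ i) / 2 :=
    fun i _ => sqrt_le_half_add (hμ i).le
  have hpos : ∀ i ∈ Finset.univ (α := Fin m), 0 < Real.sqrt (μ i) :=
    fun i _ => Real.sqrt_pos.mpr (hμ i)
  refine ⟨Finset.prod_le_prod (fun i hi => (hpos i hi).le) hle, ?_, ?_⟩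
  · intro h
    by_contra hc
    push_neg at hc
    obtain ⟨j, hj⟩ := hc
    have := Finset.prod_lt_prod hpos hle ⟨j, Finset.mem_univ j, sqrt_lt_half_add (hμ j).le hj⟩
    linarith [this, h.le, h.ge]
  · intro h
    apply Finset.prod_congr rfl
    intro i _
    rw [h i, Real.sqrt_one]
    norm_num

/-- conjugation preserves PosDef. -/
lemma posDef_conj {m : ℕ} {A C : Matrix (Fin m) (Fin m) ℂ} (hA : A.PosDef)
    [Invertible C] : (Cᴴ * A * C).PosDef := by
  refine .of_dotProduct_mulVec_pos (isHermitian_conjTranspose_mul_mul C hA.1) fun x hx => ?_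
  have hx' : C *ᵥ x ≠ 0 := by
    intro h
    apply hx
    have := congrArg (fun v => C⁻¹ *ᵥ v) h
    simpa [Matrix.mulVec_mulVec, Matrix.inv_mul_of_invertible] using this
  simpa only [star_mulVec, dotProduct_mulVec, vecMul_vecMul] using hA.dotProduct_mulVec_pos hx'

lemma posDef_half_smul {m : ℕ} {A : Matrix (Fin m) (Fin m) ℂ} (hA : A.PosDef) :
    ((2 : ℂ)⁻¹ • A).PosDef := by
  refine .of_dotProduct_mulVec_pos ?_ fun x hx => ?_
  · show ((2:ℂ)⁻¹ • A)ᴴ = _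
    rw [Matrix.conjTranspose_smul, hA.1.eq]
    norm_num
  · have h2 : (0:ℂ) < (2:ℂ)⁻¹ := by
      rw [Complex.lt_def]; norm_num
    have := hA.dotProduct_mulVec_pos hx
    rw [Matrix.smul_mulVec, dotProduct_smul, smul_eq_mul]
    exact mul_pos h2 this

/-- Determinant AM-GM for positive definite complex matrices, with equality case. -/
lemma det_avg {m : ℕ} {A B : Matrix (Fin m) (Fin m) ℂ} (hA : A.PosDef) (hB : B.PosDef) :
    Real.sqrt (A.det.re * B.det.re) ≤ ((2:ℂ)⁻¹ • (A + B)).det.re ∧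
      ((((2:ℂ)⁻¹ • (A + B)).det.re = Real.sqrt (A.det.re * B.det.re)) ↔ A = B) := by
  -- the easy direction: A = B gives equality
  have heasy : A = B → ((2:ℂ)⁻¹ • (A + B)).det.re = Real.sqrt (A.det.re * B.det.re) := by
    intro h
    subst h
    have : (2:ℂ)⁻¹ • (A + A) = A := by
      rw [← two_smul ℂ A, smul_smul]
      norm_num
    rw [this, Real.sqrt_mul_self]
    have := hA.det_pos
    rw [Complex.lt_def] at this
    exact le_of_lt (by simpa using this.1)
  -- positivity of real determinants
  have hApos := hA.det_pos
  have hBpos := hB.det_pos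
  rw [Complex.lt_def] at hApos hBpos
  set a : ℝ := A.det.re with ha
  set b : ℝ := B.det.re with hb
  have ha0 : 0 < a := by simpa using hApos.1
  have hb0 : 0 < b := by simpa using hBpos.1
  have hAdet : A.det = (a : ℂ) := Complex.ext rfl (by simpa using hApos.2.symm)
  have hBdet : B.det = (b : ℂ) := Complex.ext rfl (by simpa using hBpos.2.symm)
  -- the square root of A
  set s : Matrix (Fin m) (Fin m) ℂ := (open scoped MatrixOrder in CFC.sqrt A) with hsdef
  have hsherm : s.PosSemidef := (open scoped MatrixOrder in (CFC.sqrt_nonneg A).posSemidef)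
  have hss : s * s = A := by
    have := (open scoped MatrixOrder in CFC.sq_sqrt A hA.posSemidef.nonneg)
    rwa [pow_two] at this
  have hsdet : s.det * s.det = A.det := by rw [← Matrix.det_mul, hss]
  have hsdet0 : s.det ≠ 0 := by
    intro h
    have hz : (a : ℂ) = 0 := by rw [← hAdet, ← hsdet, h, mul_zero]
    exact ha0.ne' (by exact_mod_cast hz)
  letI : Invertible s := s.invertibleOfIsUnitDet (isUnit_iff_ne_zero.mpr hsdet0)
  have hsinv : s⁻¹.IsHermitian := hsherm.1.inv
  -- the matrix M = s⁻¹ B s⁻¹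
  set M : Matrix (Fin m) (Fin m) ℂ := s⁻¹ * B * s⁻¹ with hMdef
  have hM : M.PosDef := by
    have : M = (s⁻¹)ᴴ * B * s⁻¹ := by rw [hsinv.eq]
    rw [this]
    letI : Invertible s⁻¹ := invertibleOfLeftInverse _ s (Matrix.mul_inv_of_invertible s)
    exact posDef_conj hB
  set μ : Fin m → ℝ := hM.1.eigenvalues with hμdef
  have hμpos : ∀ i, 0 < μ i := hM.eigenvalues_pos
  -- B = s M s
  have hBsMs : s * M * s = B := by
    rw [hMdef]
    simp only [← Matrix.mul_assoc]
    rw [Matrix.mul_inv_of_invertible, Matrix.one_mul, Matrix.mul_assoc,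
      Matrix.inv_mul_of_invertible, Matrix.mul_one]
  -- A + B = s (1 + M) s
  have hAB : s * (1 + M) * s = A + B := by
    rw [Matrix.mul_add, Matrix.mul_one, Matrix.add_mul, hss, hBsMs]
  -- unitary diagonalisation of M
  set U : Matrix (Fin m) (Fin m) ℂ := (hM.1.eigenvectorUnitary : Matrix (Fin m) (Fin m) ℂ)
    with hUdef
  have hU : U * star U = 1 := Matrix.mem_unitaryGroup_iff.mp hM.1.eigenvectorUnitary.2
  have hspec : M = U * Matrix.diagonal (RCLike.ofReal ∘ μ) * star U := hM.1.spectral_theorem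
  have hdet1M : (1 + M).det = ∏ i, (1 + (μ i : ℂ)) := by
    have h1M : (1 + M) = U * (1 + Matrix.diagonal (RCLike.ofReal ∘ μ)) * star U := by
      rw [Matrix.mul_add, Matrix.add_mul, Matrix.mul_one, hU, ← hspec]
    rw [h1M, Matrix.det_mul_right_comm, hU, Matrix.one_mul,
      ← Matrix.diagonal_one, Matrix.diagonal_add, Matrix.det_diagonal]
    simp [Function.comp]
  have hdetM : M.det = ∏ i, (μ i : ℂ) := hM.1.det_eq_prod_eigenvalues
  have hdetB : B.det = A.det * M.det := by
    rw [← hBsMs, Matrix.det_mul, Matrix.det_mul, ← hsdet]; ring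
  have hdetP : ((2:ℂ)⁻¹ • (A + B)).det = (2:ℂ)⁻¹^m * (A.det * (1 + M).det) := by
    rw [Matrix.det_smul, ← hAB, Matrix.det_mul, Matrix.det_mul, ← hsdet, Fintype.card_fin]
    ring
  have hbab : b = a * ∏ i, μ i := by
    have hc : (b:ℂ) = (a:ℂ) * ∏ i, (μ i : ℂ) := by rw [← hAdet, ← hBdet, hdetB, hdetM]
    exact_mod_cast hc
  have hr : ((2:ℂ)⁻¹ • (A + B)).det.re = a * ∏ i, ((1 + μ i)/2) := by
    have hc : ((2:ℂ)⁻¹ • (A + B)).det = ((a * ∏ i, ((1 + μ i)/2) : ℝ) : ℂ) := by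
      rw [hdetP, hdet1M, hAdet]
      push_cast
      rw [Finset.prod_div_distrib, Finset.prod_const, Finset.card_univ, Fintype.card_fin]
      field_simp
      rw [mul_right_comm, ← mul_pow]; norm_num
    rw [hc, Complex.ofReal_re]
  obtain ⟨hple, hpiff⟩ := prod_key μ hμpos
  have hsqrtab : Real.sqrt (a * b) = a * Real.sqrt (∏ i, μ i) := by
    rw [hbab, ← mul_assoc, Real.sqrt_mul (mul_self_nonneg a), Real.sqrt_mul_self ha0.le]
  constructor
  · rw [hr, hsqrtab]
    exact mul_le_mul_of_nonneg_left hple ha0.le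
  · constructor
    · intro h
      rw [hr, hsqrtab] at h
      have h2 : ∏ i, ((1 + μ i)/2) = Real.sqrt (∏ i, μ i) := mul_left_cancel₀ ha0.ne' h
      have hall := hpiff.mp h2
      have hM1 : M = 1 := by
        have hd : (RCLike.ofReal ∘ μ : Fin m → ℂ) = fun _ => 1 := funext fun i => by
          simp [Function.comp, hall i]
        rw [hspec, hd, Matrix.diagonal_one, Matrix.mul_one, hU]
      have : B = A := by rw [← hBsMs, hM1, Matrix.mul_one, hss]
      exact this.symm
    · exact heasy

end HellingerAux

open Finset in
theorem stmt6 (m : ℕ) (hm : 1 ≤ m) (L : ℝ) (hL : 0 < L)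
    (S₁ S₂ : Matrix (Fin m) (Fin m) ℂ) (h₁ : S₁.PosDef) (h₂ : S₂.PosDef)
    (dH : ℝ)
    (hdH : dH = 1 - (pdet (((2 : ℂ))⁻¹ • (S₁⁻¹ + S₂⁻¹))⁻¹
                      / Real.sqrt (pdet S₁ * pdet S₂)) ^ L) :
    0 ≤ dH ∧ dH < 1 ∧ (dH = 0 ↔ S₁ = S₂) := by
  have hA : (S₁⁻¹).PosDef := h₁.inv
  have hB : (S₂⁻¹).PosDef := h₂.inv
  obtain ⟨hle, hiff⟩ := det_avg hA hB
  set P : Matrix (Fin m) (Fin m) ℂ := (2:ℂ)⁻¹ • (S₁⁻¹ + S₂⁻¹) with hPdef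
  have hPpd : P.PosDef := posDef_half_smul (hA.add hB)
  have hPpos := hPpd.det_pos
  rw [Complex.lt_def] at hPpos
  set d : ℝ := P.det.re with hd
  have d0 : 0 < d := by simpa using hPpos.1
  have hPdet : P.det = (d : ℂ) := Complex.ext rfl (by simpa using hPpos.2.symm)
  -- real determinants of S₁, S₂
  have h1pos := h₁.det_pos
  have h2pos := h₂.det_pos
  rw [Complex.lt_def] at h1pos h2pos
  set p₁ : ℝ := pdet S₁ with hp₁
  set p₂ : ℝ := pdet S₂ with hp₂
  have p₁0 : 0 < p₁ := by simpa [hp₁, pdet] using h1pos.1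
  have p₂0 : 0 < p₂ := by simpa [hp₂, pdet] using h2pos.1
  have h1det : S₁.det = (p₁ : ℂ) := Complex.ext rfl (by simpa [pdet] using h1pos.2.symm)
  have h2det : S₂.det = (p₂ : ℂ) := Complex.ext rfl (by simpa [pdet] using h2pos.2.symm)
  -- determinants of inverses
  have hinv1 : (S₁⁻¹).det.re = p₁⁻¹ := by
    rw [Matrix.det_nonsing_inv, Ring.inverse_eq_inv', h1det, ← Complex.ofReal_inv,
      Complex.ofReal_re]
  have hinv2 : (S₂⁻¹).det.re = p₂⁻¹ := by
    rw [Matrix.det_nonsing_inv, Ring.inverse_eq_inv', h2det, ← Complex.ofReal_inv,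
      Complex.ofReal_re]
  have hpdetPinv : pdet P⁻¹ = d⁻¹ := by
    rw [pdet, Matrix.det_nonsing_inv, Ring.inverse_eq_inv', hPdet, ← Complex.ofReal_inv,
      Complex.ofReal_re]
  set q : ℝ := Real.sqrt (p₁ * p₂) with hq
  have q0 : 0 < q := Real.sqrt_pos.mpr (mul_pos p₁0 p₂0)
  have hsq : Real.sqrt ((S₁⁻¹).det.re * (S₂⁻¹).det.re) = q⁻¹ := by
    rw [hinv1, hinv2, ← mul_inv, Real.sqrt_inv]
  rw [hsq] at hle hiff
  -- the equality criterion transferred to S₁ = S₂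
  have hiff' : d = q⁻¹ ↔ S₁ = S₂ := by
    rw [hiff]
    constructor
    · intro h
      have e1 : S₁⁻¹⁻¹ = S₂⁻¹⁻¹ := by rw [h]
      rwa [Matrix.nonsing_inv_nonsing_inv S₁ (by rw [h1det]; exact (Complex.ofReal_ne_zero.mpr p₁0.ne').isUnit),
        Matrix.nonsing_inv_nonsing_inv S₂ (by rw [h2det]; exact (Complex.ofReal_ne_zero.mpr p₂0.ne').isUnit)] at e1
    · intro h; rw [h]
  -- the quantity x
  set x : ℝ := d⁻¹ / q with hx
  have x0 : 0 < x := div_pos (inv_pos.mpr d0) q0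
  have hxdq : x = (d * q)⁻¹ := by rw [hx, div_eq_mul_inv, mul_inv]
  have hdq1 : 1 ≤ d * q := by
    have := mul_le_mul_of_nonneg_right hle q0.le
    rwa [inv_mul_cancel₀ q0.ne'] at this
  have xle : x ≤ 1 := by
    rw [hxdq]
    exact inv_le_one_of_one_le₀ hdq1
  have hx1iff : x = 1 ↔ S₁ = S₂ := by
    rw [hxdq, ← hiff']
    constructor
    · intro h
      have : d * q = 1 := by
        have := congrArg (·⁻¹) h
        simpa using this
      field_simp at this ⊢
      linarith [this]
    · intro h
      rw [h]
      field_simp [q0.ne']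
  -- finish with rpow
  rw [hpdetPinv, ← hx] at hdH
  have hxL1 : x ^ L ≤ 1 := Real.rpow_le_one x0.le xle hL.le
  have hxL0 : 0 < x ^ L := Real.rpow_pos_of_pos x0 L
  refine ⟨by rw [hdH]; linarith, by rw [hdH]; linarith, ?_⟩
  rw [hdH]
  constructor
  · intro h
    have hxL : x ^ L = 1 := by linarith
    apply hx1iff.mp
    by_contra hne
    have hlt : x < 1 := lt_of_le_of_ne xle hne
    have := Real.rpow_lt_one x0.le hlt hL
    linarith
  · intro h
    rw [hx1iff.mpr h] at *
    rw [Real.one_rpow]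
    ring
end

section
/- Let m ≥ 1 be an integer, L ≥ m a real number, n ≥ 1 an integer, and Z₁, …, Z_n m×m Hermitian positive definite complex matrices. Then the sample mean Σ̂ := n⁻¹·∑_{k=1}^n Z_k is Hermitian positive definite, and the log-likelihood function ℓ(Σ) := ∑_{k=1}^n log f(Z_k;Σ,L), defined on m×m Hermitian positive definite complex matrices Σ, attains its unique maximum at Σ = Σ̂; that is, ℓ(Σ) ≤ ℓ(Σ̂) for every Hermitian positive definite Σ, with equality if and only if Σ = Σ̂. -/
open Matrix ComplexOrder

lemma myPosDef_smul {m : ℕ} {M : Matrix (Fin m) (Fin m) ℂ} (hM : M.PosDef) {c : ℂ}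
    (hc : 0 < c) : (c • M).PosDef := by
  have him : c.im = 0 := by simpa using (Complex.lt_def.mp hc).2.symm
  have hsc : star c = c := by simp [Complex.ext_iff, him]
  rw [posDef_iff_dotProduct_mulVec]
  constructor
  · show (c • M)ᴴ = c • M
    rw [conjTranspose_smul, hM.1.eq, hsc]
  · intro x hx
    have h := hM.dotProduct_mulVec_pos hx
    rw [smul_mulVec, dotProduct_smul, smul_eq_mul]
    exact mul_pos hc h

lemma myPosDef_sum {n m : ℕ} (hn : 1 ≤ n) (Z : Fin n → Matrix (Fin m) (Fin m) ℂ)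
    (hZ : ∀ k, (Z k).PosDef) : (∑ k, Z k).PosDef := by
  have hne : Nonempty (Fin n) := ⟨⟨0, hn⟩⟩
  rw [posDef_iff_dotProduct_mulVec]
  constructor
  · show (∑ k, Z k)ᴴ = _
    rw [conjTranspose_sum]
    exact Finset.sum_congr rfl fun k _ => (hZ k).1
  · intro x hx
    have hmv : (∑ k, Z k) *ᵥ x = ∑ k, Z k *ᵥ x := by
      ext i
      simp [mulVec, dotProduct, Finset.sum_apply, Finset.sum_mul, Matrix.sum_apply]
      rw [Finset.sum_comm]
    have hdp : star x ⬝ᵥ ∑ k, Z k *ᵥ x = ∑ k, star x ⬝ᵥ (Z k *ᵥ x) := by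
      simp [dotProduct, Finset.sum_apply, Finset.mul_sum]
      rw [Finset.sum_comm]
    rw [hmv, hdp]
    exact Finset.sum_pos (fun k _ => (hZ k).dotProduct_mulVec_pos hx) Finset.univ_nonempty

lemma myPosDef_conj {m : ℕ} {A B : Matrix (Fin m) (Fin m) ℂ} (hA : A.PosDef)
    (hB : IsUnit B) : (Bᴴ * A * B).PosDef := by
  refine posDef_iff_dotProduct_mulVec.mpr ⟨isHermitian_conjTranspose_mul_mul B hA.1, fun x hx => ?_⟩
  have hBx : B *ᵥ x ≠ 0 := by
    intro h
    exact hx ((Matrix.mulVec_injective_iff_isUnit.mpr hB).eq_iff.mp (by simpa using h))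
  have h := hA.dotProduct_mulVec_pos hBx
  simpa only [star_mulVec, dotProduct_mulVec, vecMul_vecMul] using h

lemma det_eq_pdet {m : ℕ} {A : Matrix (Fin m) (Fin m) ℂ} (hA : A.PosDef) :
    A.det = (pdet A : ℂ) := by
  have h := hA.det_pos
  have him := (Complex.lt_def.mp h).2
  exact Complex.ext rfl (by simpa [pdet] using him.symm)

lemma key1 {m : ℕ} {A : Matrix (Fin m) (Fin m) ℂ} (hA : A.PosDef) :
    (m:ℝ) + Real.log (pdet A) ≤ rtrace A ∧ (rtrace A = (m:ℝ) + Real.log (pdet A) ↔ A = 1) := by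
  classical
  have hev : ∀ i, 0 < hA.1.eigenvalues i := hA.eigenvalues_pos
  set ev := hA.1.eigenvalues with hevdef
  have hUU : (hA.1.eigenvectorUnitary : Matrix (Fin m) (Fin m) ℂ) *
      star (hA.1.eigenvectorUnitary : Matrix (Fin m) (Fin m) ℂ) = 1 :=
    Matrix.mem_unitaryGroup_iff.mp (hA.1.eigenvectorUnitary).2
  have hUU' : star (hA.1.eigenvectorUnitary : Matrix (Fin m) (Fin m) ℂ) *
      (hA.1.eigenvectorUnitary : Matrix (Fin m) (Fin m) ℂ) = 1 :=
    Matrix.mem_unitaryGroup_iff'.mp (hA.1.eigenvectorUnitary).2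
  have htr : rtrace A = ∑ i, ev i := by
    have h := hA.1.spectral_theorem
    rw [rtrace]
    conv_lhs => rw [h, Unitary.conjStarAlgAut_apply]
    rw [trace_mul_cycle, hUU', one_mul, trace_diagonal]
    simp [Complex.re_sum]
    rfl
  have hdet : pdet A = ∏ i, ev i := by
    rw [pdet, hA.1.det_eq_prod_eigenvalues]
    norm_cast
  have hlogdet : Real.log (pdet A) = ∑ i, Real.log (ev i) := by
    rw [hdet, Real.log_prod (fun i _ => (hev i).ne')]
  have hle : ∀ i ∈ Finset.univ, 1 + Real.log (ev i) ≤ ev i := fun i _ => by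
    have := Real.log_le_sub_one_of_pos (hev i); linarith
  have hsum1 : (m:ℝ) + Real.log (pdet A) = ∑ i : Fin m, (1 + Real.log (ev i)) := by
    rw [hlogdet, Finset.sum_add_distrib]
    simp
  refine ⟨by rw [hsum1, htr]; exact Finset.sum_le_sum hle, ?_, ?_⟩
  · intro heq
    have hall : ∀ i ∈ Finset.univ, 1 + Real.log (ev i) = ev i :=
      (Finset.sum_eq_sum_iff_of_le hle).mp (by rw [← hsum1, ← htr, heq])
    have hev1 : ∀ i, ev i = 1 := by
      intro i
      by_contra h
      have h1 := Real.log_lt_sub_one_of_pos (hev i) h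
      have h2 := hall i (Finset.mem_univ i)
      linarith
    have hd1 : diagonal (RCLike.ofReal ∘ ev) = (1 : Matrix (Fin m) (Fin m) ℂ) := by
      rw [show (RCLike.ofReal ∘ ev : Fin m → ℂ) = 1 from funext fun i => by simp [hev1 i]]
      exact diagonal_one
    calc A = _ := hA.1.spectral_theorem
    _ = 1 := by rw [hd1, Unitary.conjStarAlgAut_apply, mul_one, hUU]
  · rintro rfl
    simp [rtrace, pdet, trace_one, det_one]

lemma key2 {m : ℕ} {P Q : Matrix (Fin m) (Fin m) ℂ} (hP : P.PosDef) (hQ : Q.PosDef) :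
    ((m:ℝ) + Real.log (pdet Q) - Real.log (pdet P) ≤ rtrace (P⁻¹ * Q)) ∧
    (rtrace (P⁻¹ * Q) = (m:ℝ) + Real.log (pdet Q) - Real.log (pdet P) ↔ P = Q) := by
  classical
  obtain ⟨R, hRH, hRR⟩ : ∃ R : Matrix (Fin m) (Fin m) ℂ, R.IsHermitian ∧ R * R = P := by
    open scoped MatrixOrder in
    exact ⟨CFC.sqrt P, (CFC.sqrt_nonneg P).posSemidef.1,
      CFC.sqrt_mul_sqrt_self P hP.posSemidef.nonneg⟩
  have hdP : P.det ≠ 0 := hP.det_pos.ne'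
  have hdR : R.det ≠ 0 := by
    intro h
    apply hdP
    rw [← hRR, det_mul, h, mul_zero]
  have hRunit : IsUnit R := (Matrix.isUnit_iff_isUnit_det R).mpr hdR.isUnit
  have hRiR : R⁻¹ * R = 1 := Matrix.nonsing_inv_mul R hdR.isUnit
  have hRRi : R * R⁻¹ = 1 := Matrix.mul_nonsing_inv R hdR.isUnit
  set A := R⁻¹ * Q * R⁻¹ with hAdef
  have hAH : A.PosDef := by
    have h1 : (R⁻¹)ᴴ = R⁻¹ := hRH.inv.eq
    have := myPosDef_conj hQ (isUnit_nonsing_inv_iff.mpr hRunit)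
    rwa [h1] at this
  have hPinv : P⁻¹ = R⁻¹ * R⁻¹ := by rw [← hRR, Matrix.mul_inv_rev]
  have htrA : rtrace A = rtrace (P⁻¹ * Q) := by
    rw [rtrace, rtrace, hAdef, trace_mul_cycle, ← hPinv]
  have hdetA : pdet A * pdet P = pdet Q := by
    have hAP : A * P = R⁻¹ * Q * R := by
      rw [hAdef, ← hRR]
      calc R⁻¹ * Q * R⁻¹ * (R * R) = R⁻¹ * Q * (R⁻¹ * R) * R := by
            simp only [Matrix.mul_assoc]
      _ = R⁻¹ * Q * R := by rw [hRiR, Matrix.mul_one]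
    have h1 : A.det * P.det = Q.det := by
      rw [← det_mul, hAP]
      rw [Matrix.det_conj' hRunit]
    rw [det_eq_pdet hAH, det_eq_pdet hP, det_eq_pdet hQ] at h1
    exact_mod_cast h1
  have hlogA : Real.log (pdet A) = Real.log (pdet Q) - Real.log (pdet P) := by
    have hA0 := pdet_pos hAH
    have hP0 := pdet_pos hP
    have : pdet A = pdet Q / pdet P := by
      field_simp
      linarith [hdetA]
    rw [this, Real.log_div (pdet_pos hQ).ne' hP0.ne']
  have hA1 : A = 1 ↔ P = Q := by
    constructor
    · intro h
      have h2 : R * (R⁻¹ * Q * R⁻¹) * R = R * 1 * R := by rw [← hAdef, h]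
      rw [Matrix.mul_one, hRR] at h2
      rw [← h2]
      calc R * (R⁻¹ * Q * R⁻¹) * R = (R * R⁻¹) * Q * (R⁻¹ * R) := by
            simp only [Matrix.mul_assoc]
      _ = Q := by rw [hRRi, hRiR, Matrix.one_mul, Matrix.mul_one]
    · intro h
      rw [hAdef, ← h, ← hRR]
      calc R⁻¹ * (R * R) * R⁻¹ = (R⁻¹ * R) * (R * R⁻¹) := by simp only [Matrix.mul_assoc]
      _ = 1 := by rw [hRiR, hRRi, Matrix.one_mul]
  obtain ⟨hk1, hk2⟩ := key1 hAH
  rw [htrA, hlogA] at hk1 hk2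
  constructor
  · linarith [hk1]
  · rw [← hA1, ← hk2]
    constructor <;> intro h <;> linarith [h]

theorem stmt7 (m : ℕ) (hm : 1 ≤ m) (L : ℝ) (hL : (m : ℝ) ≤ L)
    (n : ℕ) (hn : 1 ≤ n) (Z : Fin n → Matrix (Fin m) (Fin m) ℂ)
    (hZ : ∀ k, (Z k).PosDef)
    (Shat : Matrix (Fin m) (Fin m) ℂ)
    (hShat : Shat = ((n : ℂ))⁻¹ • ∑ k, Z k) :
    Shat.PosDef ∧
    ∀ S : Matrix (Fin m) (Fin m) ℂ, S.PosDef →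
      (∑ k, Real.log (wdens m L S (Z k))) ≤ (∑ k, Real.log (wdens m L Shat (Z k))) ∧
      ((∑ k, Real.log (wdens m L S (Z k))) = (∑ k, Real.log (wdens m L Shat (Z k)))
        ↔ S = Shat) := by
  classical
  have hm0 : (0:ℝ) < m := by exact_mod_cast hm
  have hL0 : (0:ℝ) < L := lt_of_lt_of_le hm0 hL
  have hn0 : (0:ℝ) < n := by exact_mod_cast hn
  have hnC : ((n:ℂ)) ≠ 0 := by
    exact_mod_cast Nat.cast_ne_zero.mpr (Nat.one_le_iff_ne_zero.mp hn)
  have hSsum : (∑ k, Z k).PosDef := myPosDef_sum hn Z hZ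
  have hcpos : (0:ℂ) < ((n:ℂ))⁻¹ := by
    rw [Complex.lt_def]
    constructor
    · simp only [Complex.zero_re]
      rw [show ((n:ℂ))⁻¹ = (((n:ℝ)⁻¹ : ℝ) : ℂ) by push_cast; ring]
      rw [Complex.ofReal_re]
      positivity
    · simp only [Complex.zero_im]
      rw [show ((n:ℂ))⁻¹ = (((n:ℝ)⁻¹ : ℝ) : ℂ) by push_cast; ring]
      simp
  have hShatPD : Shat.PosDef := hShat ▸ myPosDef_smul hSsum hcpos
  refine ⟨hShatPD, ?_⟩
  intro S hS
  have hmG : 0 < mGamma m L := by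
    unfold mGamma
    apply mul_pos (pow_pos Real.pi_pos _)
    apply Finset.prod_pos
    intro i hi
    apply Real.Gamma_pos_of_pos
    have : (i:ℝ) < m := by exact_mod_cast Finset.mem_range.mp hi
    linarith
  have hlogw : ∀ (T : Matrix (Fin m) (Fin m) ℂ), T.PosDef → ∀ k,
      Real.log (wdens m L T (Z k)) =
        (((m:ℝ)*L) * Real.log L + (L - m) * Real.log (pdet (Z k)) - Real.log (mGamma m L))
          - L * rtrace (T⁻¹ * Z k) - L * Real.log (pdet T) := by
    intro T hT k
    have h1 : (0:ℝ) < L ^ ((m:ℝ)*L) := Real.rpow_pos_of_pos hL0 _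
    have h2 : 0 < pdet (Z k) ^ (L - (m:ℝ)) := Real.rpow_pos_of_pos (pdet_pos (hZ k)) _
    have h3 : (0:ℝ) < Real.exp (-(L * rtrace (T⁻¹ * Z k))) := Real.exp_pos _
    have h4 : 0 < pdet T ^ L := Real.rpow_pos_of_pos (pdet_pos hT) _
    rw [wdens, Real.log_div (by positivity) (by positivity),
      Real.log_mul (by positivity) h3.ne', Real.log_mul h1.ne' h2.ne',
      Real.log_mul h4.ne' hmG.ne', Real.log_exp, Real.log_rpow hL0,
      Real.log_rpow (pdet_pos (hZ k)), Real.log_rpow (pdet_pos hT)]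
    ring
  have hZsum : ∑ k, Z k = (n:ℂ) • Shat := by
    rw [hShat, smul_smul, mul_inv_cancel₀ hnC, one_smul]
  have hrt : ∀ T : Matrix (Fin m) (Fin m) ℂ,
      ∑ k, rtrace (T⁻¹ * Z k) = (n:ℝ) * rtrace (T⁻¹ * Shat) := by
    intro T
    have h1 : ∑ k, (T⁻¹ * Z k).trace = (T⁻¹ * ∑ k, Z k).trace := by
      rw [Finset.mul_sum, trace_sum]
    have h2 : ∑ k, rtrace (T⁻¹ * Z k) = ((T⁻¹ * ∑ k, Z k).trace).re := by
      rw [← h1]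
      simp [rtrace, Complex.re_sum]
    rw [h2, hZsum, Matrix.mul_smul, trace_smul, smul_eq_mul]
    simp [rtrace, Complex.mul_re]
  have hShat1 : rtrace (Shat⁻¹ * Shat) = (m:ℝ) := by
    rw [Matrix.nonsing_inv_mul Shat (isUnit_iff_ne_zero.mpr hShatPD.det_pos.ne')]
    simp [rtrace, trace_one]
  have hsum : ∀ (T : Matrix (Fin m) (Fin m) ℂ), T.PosDef →
      ∑ k, Real.log (wdens m L T (Z k))
        = (∑ k, (((m:ℝ)*L) * Real.log L + (L - m) * Real.log (pdet (Z k))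
            - Real.log (mGamma m L)))
          - L * ((n:ℝ) * rtrace (T⁻¹ * Shat)) - (n:ℝ) * (L * Real.log (pdet T)) := by
    intro T hT
    rw [Finset.sum_congr rfl (fun k _ => hlogw T hT k), Finset.sum_sub_distrib,
      Finset.sum_sub_distrib, ← Finset.mul_sum, hrt T, Finset.sum_const,
      Finset.card_univ, Fintype.card_fin, nsmul_eq_mul]
  obtain ⟨hk1, hk2⟩ := key2 hS hShatPD
  rw [hsum S hS, hsum Shat hShatPD, hShat1]
  have hLn : (0:ℝ) < L * n := mul_pos hL0 hn0
  constructor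
  · nlinarith [mul_le_mul_of_nonneg_left hk1 hLn.le]
  · constructor
    · intro h
      apply hk2.mp
      have h4 : (L*(n:ℝ))*(rtrace (S⁻¹ * Shat) + Real.log (pdet S))
          = (L*(n:ℝ))*((m:ℝ) + Real.log (pdet Shat)) := by linear_combination -h
      have h5 := mul_left_cancel₀ hLn.ne' h4
      linarith
    · intro h
      rw [h, hShat1]
end

section
/- Let L > 0 and σ₁², σ₂² > 0 be real numbers, and let f₁(z) = f(z;σ₁²,L) and f₂(z) = f(z;σ₂²,L) be the corresponding gamma densities. Then ∫₀^∞ √(f₁(z)·f₂(z)) dz = (2σ₁σ₂/(σ₁²+σ₂²))^L, where σ_i = √(σ_i²). Consequently the Bhattacharyya distance d_BA = −log ∫₀^∞ √(f₁ f₂) between the two gamma laws equals L·log((σ₁²+σ₂²)/(2σ₁σ₂)), in agreement with the single-channel (m = 1) case of the closed-form Bhattacharyya distance between scaled complex Wishart laws. -/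
open MeasureTheory

noncomputable def gdens (L s2 : ℝ) (z : ℝ) : ℝ :=
  L ^ L * z ^ (L - 1) * Real.exp (-(L * z / s2)) / (s2 ^ L * Real.Gamma L)

theorem stmt9 (L s1 s2 : ℝ) (hL : 0 < L) (h1 : 0 < s1) (h2 : 0 < s2) :
    (∫ z in Set.Ioi (0 : ℝ), Real.sqrt (gdens L s1 z * gdens L s2 z))
      = (2 * Real.sqrt s1 * Real.sqrt s2 / (s1 + s2)) ^ L ∧
    (-Real.log (∫ z in Set.Ioi (0 : ℝ), Real.sqrt (gdens L s1 z * gdens L s2 z)))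
      = L * Real.log ((s1 + s2) / (2 * Real.sqrt s1 * Real.sqrt s2)) := by
  have hG : 0 < Real.Gamma L := Real.Gamma_pos_of_pos hL
  set b : ℝ := L * (s1 + s2) / (2 * s1 * s2) with hb
  have hbpos : 0 < b := by positivity
  set C : ℝ := L ^ L / (Real.sqrt (s1 ^ L * s2 ^ L) * Real.Gamma L) with hC
  have hsq : Real.sqrt (s1 ^ L * s2 ^ L) ^ 2 = s1 ^ L * s2 ^ L :=
    Real.sq_sqrt (by positivity)
  have key : ∀ z ∈ Set.Ioi (0:ℝ),
      Real.sqrt (gdens L s1 z * gdens L s2 z)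
        = C * (z ^ (L - 1) * Real.exp (-(b * z))) := by
    intro z hz
    have hz0 : (0:ℝ) < z := hz
    have hprod : gdens L s1 z * gdens L s2 z
        = (C * (z ^ (L - 1) * Real.exp (-(b * z)))) ^ 2 := by
      have hE : Real.exp (-(L * z / s1)) * Real.exp (-(L * z / s2))
          = Real.exp (-(b * z)) ^ 2 := by
        rw [sq, ← Real.exp_add, ← Real.exp_add]
        congr 1
        rw [hb]
        field_simp
        ring
      simp only [gdens, hC]
      rw [div_mul_div_comm, mul_pow, div_pow, mul_pow]
      rw [hsq]
      rw [mul_pow, sq (z ^ (L-1)), ← hE]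
      ring
    rw [hprod, Real.sqrt_sq (by positivity)]
  have hint : (∫ z in Set.Ioi (0 : ℝ), Real.sqrt (gdens L s1 z * gdens L s2 z))
      = C * ((1 / b) ^ L * Real.Gamma L) := by
    rw [setIntegral_congr_fun measurableSet_Ioi key, integral_const_mul,
      Real.integral_rpow_mul_exp_neg_mul_Ioi hL hbpos]
  have hs1 : Real.sqrt s1 ^ 2 = s1 := Real.sq_sqrt h1.le
  have hs2 : Real.sqrt s2 ^ 2 = s2 := Real.sq_sqrt h2.le
  have hrs1 : 0 < Real.sqrt s1 := Real.sqrt_pos.mpr h1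
  have hrs2 : 0 < Real.sqrt s2 := Real.sqrt_pos.mpr h2
  have hpow : ∀ s : ℝ, 0 < s → Real.sqrt (s ^ L) = (Real.sqrt s) ^ L := by
    intro s hs
    rw [Real.sqrt_eq_rpow, Real.sqrt_eq_rpow, ← Real.rpow_mul hs.le,
      ← Real.rpow_mul hs.le, mul_comm]
  have hsqrtpow : Real.sqrt (s1 ^ L * s2 ^ L) = (Real.sqrt s1 * Real.sqrt s2) ^ L := by
    rw [Real.sqrt_mul (by positivity), hpow s1 h1, hpow s2 h2,
      ← Real.mul_rpow hrs1.le hrs2.le]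
  have hmul : L ^ L * (1/b) ^ L / (Real.sqrt s1 * Real.sqrt s2) ^ L
      = (L * (1/b) / (Real.sqrt s1 * Real.sqrt s2)) ^ L := by
    rw [← Real.mul_rpow hL.le (by positivity),
      ← Real.div_rpow (by positivity) (by positivity)]
  have harg : L * (1/b) / (Real.sqrt s1 * Real.sqrt s2)
      = 2 * Real.sqrt s1 * Real.sqrt s2 / (s1 + s2) := by
    rw [hb]
    have h12 : (0:ℝ) < s1 + s2 := by positivity
    field_simp
    linear_combination (-s2)*hs1 + (-(Real.sqrt s1)^2)*hs2
  have hval : C * ((1 / b) ^ L * Real.Gamma L)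
      = (2 * Real.sqrt s1 * Real.sqrt s2 / (s1 + s2)) ^ L := by
    calc C * ((1 / b) ^ L * Real.Gamma L)
        = L ^ L * (1/b) ^ L / (Real.sqrt s1 * Real.sqrt s2) ^ L := by
          rw [hC, hsqrtpow]; field_simp
      _ = (L * (1/b) / (Real.sqrt s1 * Real.sqrt s2)) ^ L := hmul
      _ = _ := by rw [harg]
  have hx : 0 < 2 * Real.sqrt s1 * Real.sqrt s2 / (s1 + s2) := by positivity
  refine ⟨hint.trans hval, ?_⟩
  rw [hint, hval, Real.log_rpow hx,
    show (s1 + s2) / (2 * Real.sqrt s1 * Real.sqrt s2)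
      = (2 * Real.sqrt s1 * Real.sqrt s2 / (s1 + s2))⁻¹ from (inv_div _ _).symm,
    Real.log_inv]
  ring
end

section
/- Let L > 0 and σ₁², σ₂² > 0 be real numbers, and let f₁(z) = f(z;σ₁²,L) and f₂(z) = f(z;σ₂²,L) be the corresponding gamma densities. Then the symmetrized Kullback–Leibler distance satisfies (1/2)·∫₀^∞ (f₁(z) − f₂(z))·(log f₁(z) − log f₂(z)) dz = L·[ (σ₁²/σ₂² + σ₂²/σ₁²)/2 − 1 ], in agreement with the single-channel (m = 1) case of the closed-form Kullback–Leibler distance d_KL(Σ₁,Σ₂) = L·[Re tr(Σ₁⁻¹Σ₂ + Σ₂⁻¹Σ₁)/2 − m] between scaled complex Wishart laws. -/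
open MeasureTheory

open Set Real

lemma myIntegrableOn {a r : ℝ} (ha : 0 < a) (hr : 0 < r) :
    IntegrableOn (fun t : ℝ => t ^ (a - 1) * Real.exp (-(r * t))) (Set.Ioi 0) := by
  have h := Real.GammaIntegral_convergent ha
  have h2 := (integrableOn_Ioi_comp_mul_left_iff
      (fun x : ℝ => Real.exp (-x) * x ^ (a - 1)) 0 hr).2 (by simpa using h)
  have h3 := h2.const_mul (r ^ (1 - a))
  apply IntegrableOn.congr_fun h3 ?_ measurableSet_Ioi
  intro t ht
  simp only [mem_Ioi] at ht
  have : (r * t) ^ (a - 1) = r ^ (a - 1) * t ^ (a - 1) :=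
    Real.mul_rpow hr.le ht.le
  simp only [this]
  rw [show r ^ (1 - a) * (Real.exp (-(r * t)) * (r ^ (a - 1) * t ^ (a - 1)))
      = (r ^ (1 - a) * r ^ (a - 1)) * (t ^ (a - 1) * Real.exp (-(r * t))) by ring,
    ← Real.rpow_add hr]
  norm_num

lemma gdens_eq (L s z : ℝ) :
    gdens L s z = (L ^ L / (s ^ L * Real.Gamma L)) * (z ^ (L - 1) * Real.exp (-((L / s) * z))) := by
  unfold gdens
  rw [show L * z / s = (L / s) * z by ring]
  ring

lemma gdens_integrableOn {L s : ℝ} (hL : 0 < L) (hs : 0 < s) :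
    IntegrableOn (gdens L s) (Set.Ioi 0) := by
  rw [show gdens L s = fun z => (L ^ L / (s ^ L * Real.Gamma L)) *
      (z ^ (L - 1) * Real.exp (-((L / s) * z))) from funext (gdens_eq L s)]
  exact (myIntegrableOn hL (div_pos hL hs)).const_mul _

lemma gdens_mul_integrableOn {L s : ℝ} (hL : 0 < L) (hs : 0 < s) :
    IntegrableOn (fun z => z * gdens L s z) (Set.Ioi 0) := by
  have h := ((myIntegrableOn (by linarith : (0:ℝ) < L + 1)
      (div_pos hL hs))).const_mul (L ^ L / (s ^ L * Real.Gamma L))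
  apply IntegrableOn.congr_fun h ?_ measurableSet_Ioi
  intro z hz
  simp only [mem_Ioi] at hz
  simp only [gdens_eq]
  rw [show (L + 1 - 1 : ℝ) = 1 + (L - 1) by ring, Real.rpow_add hz, Real.rpow_one]
  ring

lemma gdens_integral {L s : ℝ} (hL : 0 < L) (hs : 0 < s) :
    ∫ z in Set.Ioi (0:ℝ), gdens L s z = 1 := by
  simp_rw [gdens_eq]
  rw [MeasureTheory.integral_const_mul,
    Real.integral_rpow_mul_exp_neg_mul_Ioi hL (div_pos hL hs)]
  rw [one_div_div, Real.div_rpow hs.le hL.le]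
  have hG := Real.Gamma_pos_of_pos hL
  field_simp

lemma gdens_mul_integral {L s : ℝ} (hL : 0 < L) (hs : 0 < s) :
    ∫ z in Set.Ioi (0:ℝ), z * gdens L s z = s := by
  rw [setIntegral_congr_fun measurableSet_Ioi (g := fun z =>
      (L ^ L / (s ^ L * Real.Gamma L)) * (z ^ (L + 1 - 1) * Real.exp (-((L / s) * z))))
      (fun z hz => by
        simp only [mem_Ioi] at hz
        simp only [gdens_eq]
        rw [show (L + 1 - 1 : ℝ) = 1 + (L - 1) by ring, Real.rpow_add hz, Real.rpow_one]
        ring)]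
  rw [MeasureTheory.integral_const_mul,
    Real.integral_rpow_mul_exp_neg_mul_Ioi (by linarith) (div_pos hL hs)]
  rw [one_div_div, Real.div_rpow hs.le hL.le, Real.Gamma_add_one hL.ne',
    Real.rpow_add_one (by positivity), Real.rpow_add_one (by positivity)]
  have hG := Real.Gamma_pos_of_pos hL
  have hp1 : (0:ℝ) < L ^ L := Real.rpow_pos_of_pos hL L
  have hp2 : (0:ℝ) < s ^ L := Real.rpow_pos_of_pos hs L
  field_simp

lemma log_gdens {L s z : ℝ} (hL : 0 < L) (hs : 0 < s) (hz : 0 < z) :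
    Real.log (gdens L s z) = L * Real.log L + (L - 1) * Real.log z - L * z / s
      - L * Real.log s - Real.log (Real.Gamma L) := by
  have hG := Real.Gamma_pos_of_pos hL
  unfold gdens
  rw [Real.log_div (by positivity) (by positivity),
    Real.log_mul (by positivity) (by positivity),
    Real.log_mul (by positivity) (by positivity),
    Real.log_mul (by positivity) (by positivity),
    Real.log_rpow hL, Real.log_rpow hz, Real.log_rpow hs, Real.log_exp]
  ring

theorem stmt11 (L s1 s2 : ℝ) (hL : 0 < L) (h1 : 0 < s1) (h2 : 0 < s2) :
    (1 / 2) * (∫ z in Set.Ioi (0 : ℝ),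
        (gdens L s1 z - gdens L s2 z) * (Real.log (gdens L s1 z) - Real.log (gdens L s2 z)))
      = L * ((s1 / s2 + s2 / s1) / 2 - 1) := by
  have key : ∀ z ∈ Set.Ioi (0:ℝ),
      (gdens L s1 z - gdens L s2 z) * (Real.log (gdens L s1 z) - Real.log (gdens L s2 z))
      = (L / s2 - L / s1) * (z * gdens L s1 z - z * gdens L s2 z)
        + (L * (Real.log s2 - Real.log s1)) * (gdens L s1 z - gdens L s2 z) := by
    intro z hz
    simp only [mem_Ioi] at hz
    rw [log_gdens hL h1 hz, log_gdens hL h2 hz]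
    field_simp
    ring
  rw [setIntegral_congr_fun measurableSet_Ioi key]
  have hA : Integrable (fun z => (L / s2 - L / s1) * (z * gdens L s1 z - z * gdens L s2 z))
      (volume.restrict (Set.Ioi 0)) :=
    ((gdens_mul_integrableOn hL h1).sub (gdens_mul_integrableOn hL h2)).const_mul _
  have hB : Integrable (fun z => (L * (Real.log s2 - Real.log s1)) *
      (gdens L s1 z - gdens L s2 z)) (volume.restrict (Set.Ioi 0)) :=
    ((gdens_integrableOn hL h1).sub (gdens_integrableOn hL h2)).const_mul _
  rw [integral_add hA hB,
    MeasureTheory.integral_const_mul, MeasureTheory.integral_const_mul,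
    integral_sub (gdens_mul_integrableOn hL h1) (gdens_mul_integrableOn hL h2),
    integral_sub (gdens_integrableOn hL h1) (gdens_integrableOn hL h2),
    gdens_mul_integral hL h1, gdens_mul_integral hL h2,
    gdens_integral hL h1, gdens_integral hL h2]
  field_simp
  ring
end

section
/- Let L > 0 and σ₁², σ₂² > 0 be real numbers, and let f₁(z) = f(z;σ₁²,L) and f₂(z) = f(z;σ₂²,L) be the corresponding gamma densities. Then the Hellinger distance d_H = 1 − ∫₀^∞ √(f₁(z)·f₂(z)) dz equals 1 − (2σ₁σ₂/(σ₁²+σ₂²))^L, it satisfies 0 ≤ d_H < 1, and d_H = 0 if and only if σ₁² = σ₂². This is the single-channel (m = 1) case of the closed-form Hellinger distance between scaled complex Wishart laws, which is confined to the interval [0,1]. -/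
open MeasureTheory

lemma stmt14_aux (L s1 s2 : ℝ) (hL : 0 < L) (h1 : 0 < s1) (h2 : 0 < s2) :
    (2 * Real.sqrt s1 * Real.sqrt s2 / (s1 + s2)) ^ L ≤ 1 ∧
    0 < (2 * Real.sqrt s1 * Real.sqrt s2 / (s1 + s2)) ^ L ∧
    ((2 * Real.sqrt s1 * Real.sqrt s2 / (s1 + s2)) ^ L = 1 ↔ s1 = s2) := by
  have hsq1 : Real.sqrt s1 * Real.sqrt s1 = s1 := Real.mul_self_sqrt h1.le
  have hsq2 : Real.sqrt s2 * Real.sqrt s2 = s2 := Real.mul_self_sqrt h2.le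
  have hs1p : 0 < Real.sqrt s1 := Real.sqrt_pos.2 h1
  have hs2p : 0 < Real.sqrt s2 := Real.sqrt_pos.2 h2
  have hs12 : (0:ℝ) < s1 + s2 := by linarith
  set r : ℝ := 2 * Real.sqrt s1 * Real.sqrt s2 / (s1 + s2) with hr
  have hrpos : 0 < r := by positivity
  have hamgm : 2 * Real.sqrt s1 * Real.sqrt s2 ≤ s1 + s2 := by
    nlinarith [sq_nonneg (Real.sqrt s1 - Real.sqrt s2)]
  have hr1 : r ≤ 1 := by rw [hr, div_le_one hs12]; exact hamgm
  refine ⟨Real.rpow_le_one hrpos.le hr1 hL.le, Real.rpow_pos_of_pos hrpos L, ?_, ?_⟩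
  · intro h
    have hreq : r = 1 := by
      by_contra hne
      have hlt : r < 1 := lt_of_le_of_ne hr1 hne
      have := Real.rpow_lt_one hrpos.le hlt hL
      linarith
    have heq : 2 * Real.sqrt s1 * Real.sqrt s2 = s1 + s2 := by
      rw [hr, div_eq_one_iff_eq hs12.ne'] at hreq; exact hreq
    have hsqeq : Real.sqrt s1 = Real.sqrt s2 := by
      nlinarith [sq_nonneg (Real.sqrt s1 - Real.sqrt s2)]
    calc s1 = Real.sqrt s1 * Real.sqrt s1 := hsq1.symm
      _ = Real.sqrt s2 * Real.sqrt s2 := by rw [hsqeq]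
      _ = s2 := hsq2
  · rintro rfl
    have : r = 1 := by rw [hr, div_eq_one_iff_eq hs12.ne']; nlinarith
    rw [this, Real.one_rpow]

theorem stmt14 (L s1 s2 : ℝ) (hL : 0 < L) (h1 : 0 < s1) (h2 : 0 < s2) :
    (1 - ∫ z in Set.Ioi (0 : ℝ), Real.sqrt (gdens L s1 z * gdens L s2 z))
      = 1 - (2 * Real.sqrt s1 * Real.sqrt s2 / (s1 + s2)) ^ L ∧
    0 ≤ 1 - ∫ z in Set.Ioi (0 : ℝ), Real.sqrt (gdens L s1 z * gdens L s2 z) ∧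
    (1 - ∫ z in Set.Ioi (0 : ℝ), Real.sqrt (gdens L s1 z * gdens L s2 z)) < 1 ∧
    ((1 - ∫ z in Set.Ioi (0 : ℝ), Real.sqrt (gdens L s1 z * gdens L s2 z)) = 0 ↔ s1 = s2) := by
  have hG : 0 < Real.Gamma L := Real.Gamma_pos_of_pos hL
  have hs12 : (0:ℝ) < s1 + s2 := by linarith
  set c : ℝ := L * (s1 + s2) / (2 * s1 * s2) with hc
  have hcpos : 0 < c := by positivity
  set C : ℝ := L ^ L / ((s1 * s2) ^ (L / 2) * Real.Gamma L) with hC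
  have hCpos : 0 < C := by positivity
  have hsq1 : Real.sqrt s1 * Real.sqrt s1 = s1 := Real.mul_self_sqrt h1.le
  have hsq2 : Real.sqrt s2 * Real.sqrt s2 = s2 := Real.mul_self_sqrt h2.le
  have hs1p : 0 < Real.sqrt s1 := Real.sqrt_pos.2 h1
  have hs2p : 0 < Real.sqrt s2 := Real.sqrt_pos.2 h2
  have hss : (s1 * s2) ^ ((1:ℝ)/2) = Real.sqrt s1 * Real.sqrt s2 := by
    rw [← Real.sqrt_eq_rpow, Real.sqrt_mul h1.le]
  have hsp : (s1 * s2) ^ (L/2) * (s1 * s2) ^ (L/2) = (s1*s2) ^ L := by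
    rw [← Real.rpow_add (by positivity)]; ring_nf
  have hspl : s1 ^ L * s2 ^ L = (s1*s2) ^ L := (Real.mul_rpow h1.le h2.le).symm
  -- integrand equality on Ioi 0
  have hint : (∫ z in Set.Ioi (0:ℝ), Real.sqrt (gdens L s1 z * gdens L s2 z))
      = C * ((1 / c) ^ L * Real.Gamma L) := by
    rw [setIntegral_congr_fun measurableSet_Ioi
      (f := fun z => Real.sqrt (gdens L s1 z * gdens L s2 z))
      (g := fun z => C * (z ^ (L - 1) * Real.exp (-(c * z)))) ?_]
    · rw [integral_const_mul, Real.integral_rpow_mul_exp_neg_mul_Ioi hL hcpos]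
    · intro z hz
      have hz' : (0:ℝ) < z := hz
      have e1 : Real.exp (-(L * z / s1)) * Real.exp (-(L * z / s2))
          = Real.exp (-(c * z)) ^ 2 := by
        rw [sq, ← Real.exp_add, ← Real.exp_add]
        congr 1
        rw [hc]
        field_simp
        ring
      have key2 : gdens L s1 z * gdens L s2 z
          = C ^ 2 * ((z ^ (L-1) * z ^ (L-1))
              * (Real.exp (-(L * z / s1)) * Real.exp (-(L * z / s2)))) := by
        simp only [gdens, hC]
        rw [div_mul_div_comm, div_pow, div_mul_eq_mul_div]
        congr 1
        · ring
        · linear_combination Real.Gamma L ^ 2 * hspl - Real.Gamma L ^ 2 * hsp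
      have key : gdens L s1 z * gdens L s2 z
          = (C * (z ^ (L - 1) * Real.exp (-(c * z)))) ^ 2 := by
        rw [key2, e1]; ring
      dsimp only
      rw [key, Real.sqrt_sq (by positivity)]
  -- value of the integral
  have h1c : (0:ℝ) < 1 / c := by positivity
  set r : ℝ := 2 * Real.sqrt s1 * Real.sqrt s2 / (s1 + s2) with hr
  have hrpos : 0 < r := by positivity
  have hbase : L * (1/c) / (Real.sqrt s1 * Real.sqrt s2) = r := by
    have hm : Real.sqrt s1 * Real.sqrt s2 * (Real.sqrt s1 * Real.sqrt s2) = s1 * s2 := by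
      nlinarith [hsq1, hsq2]
    rw [hc, hr]
    field_simp
    linear_combination (-1:ℝ) * hm
  have hL2 : (s1 * s2) ^ (L / 2) = (Real.sqrt s1 * Real.sqrt s2) ^ L := by
    rw [show L / 2 = (1/2) * L by ring, Real.rpow_mul (by positivity), hss]
  have hval : C * ((1 / c) ^ L * Real.Gamma L) = r ^ L := by
    have hsplit : (L * (1/c) / (Real.sqrt s1 * Real.sqrt s2)) ^ L
        = L ^ L * (1/c) ^ L / (Real.sqrt s1 * Real.sqrt s2) ^ L := by
      rw [Real.div_rpow (by positivity) (by positivity), Real.mul_rpow hL.le h1c.le]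
    rw [← hbase, hsplit, hC, hL2]
    have hne : (Real.sqrt s1 * Real.sqrt s2) ^ L ≠ 0 := by positivity
    field_simp
  have hInt : (∫ z in Set.Ioi (0:ℝ), Real.sqrt (gdens L s1 z * gdens L s2 z))
      = r ^ L := hint.trans hval
  have hamgm : 2 * Real.sqrt s1 * Real.sqrt s2 ≤ s1 + s2 := by
    nlinarith [sq_nonneg (Real.sqrt s1 - Real.sqrt s2), hsq1, hsq2]
  have hr1 : r ≤ 1 := by rw [hr, div_le_one hs12]; exact hamgm
  have hrL1 : r ^ L ≤ 1 := Real.rpow_le_one hrpos.le hr1 hL.le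
  have hrLpos : 0 < r ^ L := Real.rpow_pos_of_pos hrpos L
  obtain ⟨hA, hB, hCc⟩ := stmt14_aux L s1 s2 hL h1 h2
  rw [← hr] at hA hB hCc
  refine ⟨by rw [hInt], by rw [hInt]; linarith, by rw [hInt]; linarith, ?_⟩
  rw [hInt]
  rw [show (1 : ℝ) - r ^ L = 0 ↔ r ^ L = 1 by constructor <;> intro h <;> linarith]
  exact hCc
end
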